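/- If k is a field of characteristic p and p divides |X| for some cell X of a coherent configuration C, then the adjacency algebra of C over k is not semisimple. -/

import Mathlib

open Finset Matrix

/-- A coherent configuration on a finite set `V`: a partition of `V × V` into nonempty
basis relations such that the diagonal is a union of relations, the set of relations is
closed under transposition, and the intersection numbers are well defined. -/
structure CoherentConfiguration (V : Type) [Fintype V] [DecidableEq V] where
  rels : Finset (Finset (V × V))
  nonempty : ∀ r ∈ rels, r.Nonempty
  partition : ∀ p : V × V, ∃! r, r ∈ rels ∧ p ∈ r
  diag_union : ∀ r ∈ rels, (∃ p ∈ r, p.1 = p.2) → ∀ q ∈ r, q.1 = q.2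
  transpose_mem : ∀ r ∈ rels, r.image (fun p => (p.2, p.1)) ∈ rels
  inter_num : ∀ r ∈ rels, ∀ s ∈ rels, ∀ t ∈ rels, ∀ p ∈ t, ∀ q ∈ t,
    (univ.filter fun v => (p.1, v) ∈ r ∧ (v, p.2) ∈ s).card =
    (univ.filter fun v => (q.1, v) ∈ r ∧ (v, q.2) ∈ s).card

/-- A cell of a coherent configuration: a subset `X ⊆ V` with `Δ(X)` a basis relation. -/
def CoherentConfiguration.IsCell {V : Type} [Fintype V] [DecidableEq V]
    (C : CoherentConfiguration V) (X : Finset V) : Prop :=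
  X.image (fun x => (x, x)) ∈ C.rels

/-- The adjacency matrix of a relation on `V`, with entries in `K`. -/
def adjMat {V : Type} [Fintype V] [DecidableEq V] (K : Type*) [Semiring K]
    (r : Finset (V × V)) : Matrix V V K :=
  Matrix.of fun u v => if (u, v) ∈ r then 1 else 0

section Aux

variable {V : Type} [Fintype V] [DecidableEq V] (C : CoherentConfiguration V)

/-- uniqueness of the relation containing a pair -/
lemma CC.rel_unique {r s : Finset (V × V)} {q : V × V} (hr : r ∈ C.rels) (hs : s ∈ C.rels)
    (hqr : q ∈ r) (hqs : q ∈ s) : r = s := by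
  obtain ⟨t, -, ht⟩ := C.partition q
  rw [ht r ⟨hr, hqr⟩, ht s ⟨hs, hqs⟩]

variable {X : Finset V}

set_option linter.unusedSectionVars false

lemma CC.memDelta (u w : V) : ((u, w) ∈ X.image fun x => (x, x)) ↔ u ∈ X ∧ u = w := by
  simp only [Finset.mem_image, Prod.mk.injEq]
  constructor
  · rintro ⟨x, hx, rfl, rfl⟩; exact ⟨hx, rfl⟩
  · rintro ⟨hu, rfl⟩; exact ⟨u, hu, rfl, rfl⟩

/-- whether the target of a pair in a relation lies in X depends only on the relation -/
lemma CC.target_mem (hX : C.IsCell X) {s : Finset (V × V)} (hs : s ∈ C.rels) {a b : V × V}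
    (ha : a ∈ s) (hb : b ∈ s) (haX : a.2 ∈ X) : b.2 ∈ X := by
  have key := C.inter_num s hs _ hX s hs a ha b hb
  have h1 : (univ.filter fun v => (a.1, v) ∈ s ∧ (v, a.2) ∈ X.image fun x => (x, x)) = {a.2} := by
    ext v
    simp only [Finset.mem_filter, Finset.mem_univ, true_and, Finset.mem_singleton, CC.memDelta]
    constructor
    · rintro ⟨-, -, rfl⟩; rfl
    · rintro rfl; exact ⟨by simpa using ha, haX, rfl⟩
  by_contra hbX
  have h2 : (univ.filter fun v => (b.1, v) ∈ s ∧ (v, b.2) ∈ X.image fun x => (x, x)) = ∅ := by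
    ext v
    simp only [Finset.mem_filter, Finset.mem_univ, true_and, Finset.notMem_empty, iff_false,
      not_and, CC.memDelta]
    rintro - hvX hv
    subst hv
    exact hbX hvX
  rw [h1, h2] at key
  simp at key


lemma CC.deg_aux {r : Finset (V × V)} (hr : r ∈ C.rels) (x : V) :
    (univ.filter fun v => (x, v) ∈ r).card
      = ∑ s ∈ C.rels, (univ.filter fun v => (x, v) ∈ r ∧ (v, x) ∈ s).card := by
  rw [← Finset.card_biUnion]
  · congr 1
    ext v
    simp only [Finset.mem_biUnion, Finset.mem_filter, Finset.mem_univ, true_and]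
    constructor
    · intro h
      obtain ⟨s, ⟨hs, hvs⟩, -⟩ := C.partition (v, x)
      exact ⟨s, hs, h, hvs⟩
    · rintro ⟨s, _, h1, _⟩; exact h1
  · intro s hs s' hs' hne
    rw [Function.onFun, Finset.disjoint_left]
    intro v hv hv'
    simp only [Finset.mem_filter] at hv hv'
    exact hne (CC.rel_unique C hs hs' hv.2.2 hv'.2.2)

lemma CC.deg_const (hX : C.IsCell X) {r : Finset (V × V)} (hr : r ∈ C.rels) {x x' : V}
    (hx : x ∈ X) (hx' : x' ∈ X) :
    (univ.filter fun v => (x, v) ∈ r).card = (univ.filter fun v => (x', v) ∈ r).card := by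
  rw [CC.deg_aux C hr x, CC.deg_aux C hr x']
  apply Finset.sum_congr rfl
  intro s hs
  exact C.inter_num r hr s hs _ hX (x, x) ((CC.memDelta x x).mpr ⟨hx, rfl⟩)
    (x', x') ((CC.memDelta x' x').mpr ⟨hx', rfl⟩)

lemma CC.card_dvd {p : ℕ} (hX : C.IsCell X) (hdvd : p ∣ X.card) {r : Finset (V × V)}
    (hr : r ∈ C.rels) : p ∣ ∑ x ∈ X, (X.filter fun y => (x, y) ∈ r).card := by
  by_cases hT : ∃ q ∈ r, q.2 ∈ X
  · obtain ⟨q, hq, hqX⟩ := hT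
    have hfull : ∀ x, (X.filter fun y => (x, y) ∈ r) = univ.filter fun v => (x, v) ∈ r := by
      intro x
      ext y
      simp only [Finset.mem_filter, Finset.mem_univ, true_and, and_iff_right_iff_imp]
      intro hy
      exact CC.target_mem C hX hr hq (a := q) (b := (x, y)) hy hqX
    rcases X.eq_empty_or_nonempty with hXe | ⟨x₀, hx₀⟩
    · simp [hXe]
    · have : ∀ x ∈ X, (X.filter fun y => (x, y) ∈ r).card
          = (univ.filter fun v => (x₀, v) ∈ r).card := by
        intro x hx
        rw [hfull x]
        exact CC.deg_const C hX hr hx hx₀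
      rw [Finset.sum_congr rfl this, Finset.sum_const, smul_eq_mul]
      exact Dvd.dvd.mul_right hdvd _
  · have : ∀ x ∈ X, (X.filter fun y => (x, y) ∈ r).card = 0 := by
      intro x hx
      rw [Finset.card_eq_zero, Finset.filter_eq_empty_iff]
      intro y hy hxy
      exact hT ⟨(x, y), hxy, hy⟩
    rw [Finset.sum_congr rfl this]
    simp

lemma CC.entry_sum (k : Type*) [Field k] {p : ℕ} [CharP k p] (hX : C.IsCell X)
    (hdvd : p ∣ X.card) {r : Finset (V × V)} (hr : r ∈ C.rels) :
    ∑ x ∈ X, ∑ y ∈ X, adjMat k r x y = 0 := by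
  have h1 : ∑ x ∈ X, ∑ y ∈ X, adjMat k r x y
      = ((∑ x ∈ X, (X.filter fun y => (x, y) ∈ r).card : ℕ) : k) := by
    push_cast
    apply Finset.sum_congr rfl
    intro x hx
    rw [← Finset.sum_boole]
    rfl
  rw [h1]
  exact (CharP.cast_eq_zero_iff k p _).mpr (CC.card_dvd C hX hdvd hr)


variable (k : Type*) [Field k]

/-- the span of the adjacency matrices -/
noncomputable def CC.S : Submodule k (Matrix V V k) :=
  Submodule.span k {M : Matrix V V k | ∃ r ∈ C.rels, M = adjMat k r}

lemma CC.const_mem (M : Matrix V V k)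
    (h : ∀ t ∈ C.rels, ∀ a ∈ t, ∀ b ∈ t, M a.1 a.2 = M b.1 b.2) : M ∈ CC.S C k := by
  have key : M = ∑ t ∈ C.rels.attach,
      M ((C.nonempty t.1 t.2).choose).1 ((C.nonempty t.1 t.2).choose).2 • adjMat k t.1 := by
    ext u v
    rw [Matrix.sum_apply]
    obtain ⟨t₀, ⟨ht₀, huv⟩, huniq⟩ := C.partition (u, v)
    rw [Finset.sum_eq_single (⟨t₀, ht₀⟩ : {x // x ∈ C.rels})]
    · have hrep := (C.nonempty t₀ ht₀).choose_spec
      have : adjMat k t₀ u v = 1 := by simp [adjMat, huv]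
      rw [Matrix.smul_apply, this, smul_eq_mul, mul_one]
      exact (h t₀ ht₀ _ hrep (u, v) huv).symm
    · intro t ht hne
      have hzero : adjMat k t.1 u v = 0 := by
        simp only [adjMat, Matrix.of_apply, ite_eq_right_iff]
        intro habs
        exact absurd (Subtype.ext (huniq t.1 ⟨t.2, habs⟩)) hne
      rw [Matrix.smul_apply, hzero, smul_zero]
    · intro habs
      exact absurd (Finset.mem_attach _ _) habs
  rw [key]
  exact Submodule.sum_mem _ fun t _ =>
    Submodule.smul_mem _ _ (Submodule.subset_span ⟨t.1, t.2, rfl⟩)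

lemma CC.one_mem : (1 : Matrix V V k) ∈ CC.S C k := by
  apply CC.const_mem
  intro t ht a ha b hb
  by_cases h1 : a.1 = a.2
  · have h2 : b.1 = b.2 := C.diag_union t ht ⟨a, ha, h1⟩ b hb
    rw [Matrix.one_apply, Matrix.one_apply, if_pos h1, if_pos h2]
  · have h2 : b.1 ≠ b.2 := fun h2 => h1 (C.diag_union t ht ⟨b, hb, h2⟩ a ha)
    rw [Matrix.one_apply, Matrix.one_apply, if_neg h1, if_neg h2]

lemma CC.adj_entry (r s : Finset (V × V)) (q : V × V) :
    (adjMat k r * adjMat k s) q.1 q.2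
      = ((univ.filter fun v => (q.1, v) ∈ r ∧ (v, q.2) ∈ s).card : k) := by
  rw [Matrix.mul_apply, ← Finset.sum_boole]
  apply Finset.sum_congr rfl
  intro w _
  by_cases h1 : (q.1, w) ∈ r <;> by_cases h2 : (w, q.2) ∈ s <;> simp [adjMat, h1, h2]

lemma CC.mul_adj_mem {r s : Finset (V × V)} (hr : r ∈ C.rels) (hs : s ∈ C.rels) :
    adjMat k r * adjMat k s ∈ CC.S C k := by
  apply CC.const_mem
  intro t ht a ha b hb
  rw [CC.adj_entry, CC.adj_entry]
  exact_mod_cast congrArg _ (C.inter_num r hr s hs t ht a ha b hb)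

lemma CC.mul_mem {M N : Matrix V V k} (hM : M ∈ CC.S C k) (hN : N ∈ CC.S C k) :
    M * N ∈ CC.S C k := by
  have hle : CC.S C k * CC.S C k ≤ CC.S C k := by
    rw [CC.S, Submodule.span_mul_span, Submodule.span_le]
    rintro x ⟨m, ⟨r, hr, rfl⟩, n, ⟨s, hs, rfl⟩, rfl⟩
    exact CC.mul_adj_mem C k hr hs
  exact hle (Submodule.mul_mem_mul hM hN)

lemma CC.adjoin_sub {M : Matrix V V k}
    (hM : M ∈ Algebra.adjoin k {M : Matrix V V k | ∃ r ∈ C.rels, M = adjMat k r}) :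
    M ∈ CC.S C k := by
  induction hM using Algebra.adjoin_induction with
  | mem x hx => exact Submodule.subset_span hx
  | algebraMap c =>
    rw [Algebra.algebraMap_eq_smul_one]
    exact Submodule.smul_mem _ _ (CC.one_mem C k)
  | add _ _ _ _ h1 h2 => exact Submodule.add_mem _ h1 h2
  | mul _ _ _ _ h1 h2 => exact CC.mul_mem C k h1 h2


lemma CC.sum_zero {p : ℕ} [CharP k p] (hX : C.IsCell X) (hdvd : p ∣ X.card)
    {M : Matrix V V k} (hM : M ∈ CC.S C k) : ∑ x ∈ X, ∑ y ∈ X, M x y = 0 := by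
  induction hM using Submodule.span_induction with
  | mem M hM =>
    obtain ⟨r, hr, rfl⟩ := hM
    exact CC.entry_sum C k hX hdvd hr
  | zero => simp
  | add x y _ _ hx hy => simp [Finset.sum_add_distrib, hx, hy]
  | smul c x _ hx =>
    simp only [Matrix.smul_apply, smul_eq_mul, ← Finset.mul_sum, hx, mul_zero]

/-- the all-ones matrix on the X-block -/
def CC.JX (X : Finset V) : Matrix V V k :=
  Matrix.of fun u v => if u ∈ X ∧ v ∈ X then (1 : k) else 0

lemma CC.allones : ∀ w z : V, (∑ r ∈ C.rels, adjMat k r) w z = 1 := by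
  intro w z
  rw [Matrix.sum_apply]
  obtain ⟨t₀, ⟨ht₀, hwz⟩, huniq⟩ := C.partition (w, z)
  rw [Finset.sum_eq_single t₀]
  · simp [adjMat, hwz]
  · intro r hr hne
    simp only [adjMat, Matrix.of_apply, ite_eq_right_iff]
    intro habs
    exact absurd (huniq r ⟨hr, habs⟩) hne
  · intro habs
    exact absurd ht₀ habs

lemma CC.JX_eq (hX : C.IsCell X) :
    CC.JX k X = adjMat k (X.image fun x => (x, x)) * (∑ r ∈ C.rels, adjMat k r)
      * adjMat k (X.image fun x => (x, x)) := by
  have hDA : ∀ u z : V, (adjMat k (X.image fun x => (x, x)) * (∑ r ∈ C.rels, adjMat k r)) u z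
      = if u ∈ X then 1 else 0 := by
    intro u z
    rw [Matrix.mul_apply]
    have : ∀ w : V, adjMat k (X.image fun x => (x, x)) u w * (∑ r ∈ C.rels, adjMat k r) w z
        = if u ∈ X ∧ u = w then 1 else 0 := by
      intro w
      rw [CC.allones C k w z, mul_one]
      simp only [adjMat, Matrix.of_apply, CC.memDelta]
    rw [Finset.sum_congr rfl fun w _ => this w]
    by_cases huX : u ∈ X <;> simp [huX]
  ext u v
  rw [Matrix.mul_apply, Finset.sum_congr rfl fun z (_ : z ∈ univ) => by rw [hDA u z]]
  have : ∀ z : V, (if u ∈ X then 1 else 0) * adjMat k (X.image fun x => (x, x)) z v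
      = if (u ∈ X ∧ v ∈ X) ∧ z = v then 1 else 0 := by
    intro z
    simp only [adjMat, Matrix.of_apply, CC.memDelta]
    by_cases huX : u ∈ X <;> by_cases hvX : v ∈ X <;> by_cases hzv : z = v <;>
      simp [huX, hvX, hzv] <;> try (subst hzv) <;> simp_all
  rw [Finset.sum_congr rfl fun z _ => this z]
  by_cases h : u ∈ X ∧ v ∈ X <;> simp [CC.JX, h]

lemma CC.sandwich {p : ℕ} [CharP k p] (hX : C.IsCell X) (hdvd : p ∣ X.card)
    {M : Matrix V V k} (hM : M ∈ CC.S C k) : CC.JX k X * M * CC.JX k X = 0 := by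
  have hsum := CC.sum_zero C k hX hdvd hM
  have hJM : ∀ u y : V, (CC.JX k X * M) u y = if u ∈ X then ∑ w ∈ X, M w y else 0 := by
    intro u y
    rw [Matrix.mul_apply]
    have : ∀ w : V, CC.JX k X u w * M w y = if u ∈ X then (if w ∈ X then M w y else 0) else 0 := by
      intro w
      simp only [CC.JX, Matrix.of_apply]
      by_cases huX : u ∈ X <;> by_cases hwX : w ∈ X <;> simp [huX, hwX]
    rw [Finset.sum_congr rfl fun w _ => this w]
    by_cases huX : u ∈ X <;> simp [huX, Finset.sum_ite_mem]
  ext u v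
  rw [Matrix.zero_apply, Matrix.mul_apply]
  have : ∀ y : V, (CC.JX k X * M) u y * CC.JX k X y v
      = if (u ∈ X ∧ v ∈ X) ∧ y ∈ X then ∑ w ∈ X, M w y else 0 := by
    intro y
    rw [hJM u y]
    simp only [CC.JX, Matrix.of_apply]
    by_cases huX : u ∈ X <;> by_cases hvX : v ∈ X <;> by_cases hyX : y ∈ X <;>
      simp [huX, hvX, hyX]
  rw [Finset.sum_congr rfl fun y _ => this y]
  by_cases h : u ∈ X ∧ v ∈ X
  · simp only [h, true_and, Finset.sum_ite_mem, Finset.univ_inter]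
    rw [Finset.sum_comm]
    exact hsum
  · simp [h]

end Aux

set_option synthInstance.maxHeartbeats 1000000 in
set_option maxHeartbeats 1000000 in
/-- If `k` is a field of (positive) characteristic `p` and `p` divides `|X|` for some cell
`X` of a coherent configuration, then the adjacency algebra over `k` is not semisimple. -/
theorem stmt9 {V : Type} [Fintype V] [DecidableEq V] (C : CoherentConfiguration V)
    (k : Type*) [Field k] (p : ℕ) (hp : p.Prime) [CharP k p]
    (X : Finset V) (hX : C.IsCell X) (hdvd : p ∣ X.card) :
    ¬ IsSemisimpleRing
      (Algebra.adjoin k {M : Matrix V V k | ∃ r ∈ C.rels, M = adjMat k r}) := by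
  intro hss
  set A := Algebra.adjoin k {M : Matrix V V k | ∃ r ∈ C.rels, M = adjMat k r} with hA
  have hJmem : CC.JX k X ∈ A := by
    rw [CC.JX_eq C k hX]
    exact mul_mem (mul_mem (Algebra.subset_adjoin ⟨_, hX, rfl⟩)
      (Subalgebra.sum_mem _ fun r hr => Algebra.subset_adjoin ⟨r, hr, rfl⟩))
      (Algebra.subset_adjoin ⟨_, hX, rfl⟩)
  obtain ⟨x₀, hx₀⟩ : X.Nonempty := by
    obtain ⟨q, hq⟩ := C.nonempty _ hX
    rw [Finset.mem_image] at hq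
    obtain ⟨x, hx, -⟩ := hq
    exact ⟨x, hx⟩
  have hJne : CC.JX k X ≠ 0 := by
    intro h
    have := congrFun (congrFun h x₀) x₀
    simp [CC.JX, hx₀] at this
  let z : A := ⟨CC.JX k X, hJmem⟩
  obtain ⟨e, he, hspan⟩ :=
    IsSemisimpleRing.ideal_eq_span_idempotent (R := A) (Ideal.span {z})
  have hez : e ∈ Ideal.span {z} := by
    rw [hspan]
    exact Ideal.subset_span rfl
  obtain ⟨c, hc⟩ := Submodule.mem_span_singleton.mp hez
  have hzcz : z * (c * z) = 0 := by
    apply Subtype.ext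
    have hcS : (c : Matrix V V k) ∈ CC.S C k := CC.adjoin_sub C k c.2
    have := CC.sandwich C k hX hdvd hcS
    show (CC.JX k X) * ((c : Matrix V V k) * CC.JX k X) = 0
    rw [← mul_assoc]
    exact this
  have he0 : e = 0 := by
    have h1 : e * e = 0 := by
      rw [← hc, smul_eq_mul, mul_assoc, hzcz, mul_zero]
    rw [← he, h1]
  have hz0 : z = 0 := by
    have hzmem : z ∈ Ideal.span {z} := Ideal.subset_span rfl
    rw [hspan, he0] at hzmem
    simpa [Set.singleton_zero, Ideal.span_zero, Ideal.mem_bot] using hzmem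
  exact hJne (congrArg Subtype.val hz0)
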